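/- Let N₁, N₂ be positive integers and h₁, h₂ > 0, and let U, V, R : ℝ → (ℤ × ℤ → ℝ) be time-dependent grid functions, (N₁,N₂)-periodic for every t, such that for each (j₁,j₂) the maps t ↦ U(t)(j₁,j₂), t ↦ V(t)(j₁,j₂), t ↦ R(t)(j₁,j₂) are differentiable, and suppose that for all t and (j₁,j₂): (d/dt)U(t)(j₁,j₂) = V(t)(j₁,j₂); (d/dt)V(t)(j₁,j₂) = (δ_x²U(t))(j₁,j₂) + (δ_y²U(t))(j₁,j₂) − b(U(t)(j₁,j₂))·R(t)(j₁,j₂); (d/dt)R(t)(j₁,j₂) = (1/2)·b(U(t)(j₁,j₂))·V(t)(j₁,j₂). Then the semi-discrete modified global energy 𝓔(t) = h₁h₂ Σ_{j₁=0}^{N₁−1} Σ_{j₂=0}^{N₂−1} [ (1/2)V(t)(j₁,j₂)² + (1/2)((δ_xU(t))(j₁,j₂))² + (1/2)((δ_yU(t))(j₁,j₂))² + R(t)(j₁,j₂)² ] is constant in t. -/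

import Mathlib

lemma telescope (N : ℕ) (g : ℤ → ℝ) (hper : ∀ j : ℤ, g (j + N) = g j) :
    ∑ j ∈ Finset.range N, (g ((j : ℤ) + 1) - g (j : ℤ)) = 0 := by
  have h := Finset.sum_range_sub (fun n : ℕ => g (n : ℤ)) N
  have hc : ∀ j ∈ Finset.range N,
      g ((j : ℤ) + 1) - g (j : ℤ) = (fun n : ℕ => g (n : ℤ)) (j + 1) - (fun n : ℕ => g (n : ℤ)) j := by
    intro j _
    push_cast
    ring_nf
  rw [Finset.sum_congr rfl hc, h]
  have h0 : g ((N : ℤ)) = g 0 := by simpa using hper 0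
  simp [h0]

lemma sbp (N : ℕ) {h : ℝ} (hh : h ≠ 0) (u v : ℤ → ℝ)
    (hu : ∀ j : ℤ, u (j + N) = u j) (hv : ∀ j : ℤ, v (j + N) = v j) :
    ∑ j ∈ Finset.range N,
      (v (j : ℤ) * ((u ((j : ℤ) + 1) - 2 * u (j : ℤ) + u ((j : ℤ) - 1)) / h ^ 2)
        + ((u ((j : ℤ) + 1) - u (j : ℤ)) / h) * ((v ((j : ℤ) + 1) - v (j : ℤ)) / h)) = 0 := by
  set g : ℤ → ℝ := fun k => (u k * v k - u (k - 1) * v k) / h ^ 2 with hg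
  have hgper : ∀ j : ℤ, g (j + N) = g j := by
    intro j
    simp only [hg]
    rw [hu, hv, show j + (N : ℤ) - 1 = j - 1 + N by ring, hu]
  calc ∑ j ∈ Finset.range N,
      (v (j : ℤ) * ((u ((j : ℤ) + 1) - 2 * u (j : ℤ) + u ((j : ℤ) - 1)) / h ^ 2)
        + ((u ((j : ℤ) + 1) - u (j : ℤ)) / h) * ((v ((j : ℤ) + 1) - v (j : ℤ)) / h))
      = ∑ j ∈ Finset.range N, (g ((j : ℤ) + 1) - g (j : ℤ)) := by
        refine Finset.sum_congr rfl fun j _ => ?_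
        simp only [hg]
        rw [show (j : ℤ) + 1 - 1 = (j : ℤ) by ring]
        field_simp
        ring
    _ = 0 := telescope N g hgper

/-- The function `b(x) = sin x / √(2 - cos x)`. -/
noncomputable def b (x : ℝ) : ℝ := Real.sin x / Real.sqrt (2 - Real.cos x)

/-- Forward difference in the first index, with mesh size `h₁`. -/
noncomputable def dx (h₁ : ℝ) (W : ℤ × ℤ → ℝ) : ℤ × ℤ → ℝ :=
  fun j => (W (j.1 + 1, j.2) - W (j.1, j.2)) / h₁

/-- Forward difference in the second index, with mesh size `h₂`. -/
noncomputable def dy (h₂ : ℝ) (W : ℤ × ℤ → ℝ) : ℤ × ℤ → ℝ :=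
  fun j => (W (j.1, j.2 + 1) - W (j.1, j.2)) / h₂

/-- Second central difference in the first index, with mesh size `h₁`. -/
noncomputable def dxx (h₁ : ℝ) (W : ℤ × ℤ → ℝ) : ℤ × ℤ → ℝ :=
  fun j => (W (j.1 + 1, j.2) - 2 * W (j.1, j.2) + W (j.1 - 1, j.2)) / h₁ ^ 2

/-- Second central difference in the second index, with mesh size `h₂`. -/
noncomputable def dyy (h₂ : ℝ) (W : ℤ × ℤ → ℝ) : ℤ × ℤ → ℝ :=
  fun j => (W (j.1, j.2 + 1) - 2 * W (j.1, j.2) + W (j.1, j.2 - 1)) / h₂ ^ 2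

/-- An `(N₁,N₂)`-periodic grid function. -/
def GridPeriodic (N₁ N₂ : ℕ) (W : ℤ × ℤ → ℝ) : Prop :=
  ∀ j₁ j₂ : ℤ, W (j₁ + N₁, j₂) = W (j₁, j₂) ∧ W (j₁, j₂ + N₂) = W (j₁, j₂)

theorem semi_discrete_global_energy_conservation
    (N₁ N₂ : ℕ) (hN₁ : 0 < N₁) (hN₂ : 0 < N₂)
    (h₁ h₂ : ℝ) (hh₁ : 0 < h₁) (hh₂ : 0 < h₂)
    (U V R : ℝ → ℤ × ℤ → ℝ)
    (hUper : ∀ t : ℝ, GridPeriodic N₁ N₂ (U t))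
    (hVper : ∀ t : ℝ, GridPeriodic N₁ N₂ (V t))
    (hRper : ∀ t : ℝ, GridPeriodic N₁ N₂ (R t))
    (hUdiff : ∀ j : ℤ × ℤ, Differentiable ℝ (fun t => U t j))
    (hVdiff : ∀ j : ℤ × ℤ, Differentiable ℝ (fun t => V t j))
    (hRdiff : ∀ j : ℤ × ℤ, Differentiable ℝ (fun t => R t j))
    (h1 : ∀ (t : ℝ) (j : ℤ × ℤ), deriv (fun s => U s j) t = V t j)
    (h2 : ∀ (t : ℝ) (j : ℤ × ℤ), deriv (fun s => V s j) t =
      dxx h₁ (U t) j + dyy h₂ (U t) j - b (U t j) * R t j)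
    (h3 : ∀ (t : ℝ) (j : ℤ × ℤ), deriv (fun s => R s j) t =
      (1/2) * b (U t j) * V t j)
    (E : ℝ → ℝ)
    (hE : ∀ t : ℝ, E t = h₁ * h₂ *
      ∑ j₁ ∈ Finset.range N₁, ∑ j₂ ∈ Finset.range N₂,
        ((1/2) * (V t ((j₁ : ℤ), (j₂ : ℤ)))^2
          + (1/2) * (dx h₁ (U t) ((j₁ : ℤ), (j₂ : ℤ)))^2
          + (1/2) * (dy h₂ (U t) ((j₁ : ℤ), (j₂ : ℤ)))^2
          + (R t ((j₁ : ℤ), (j₂ : ℤ)))^2)) :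
    ∀ t : ℝ, E t = E 0 := by
  have hU' : ∀ (t : ℝ) (j : ℤ × ℤ), HasDerivAt (fun s => U s j) (V t j) t := by
    intro t j
    have h := ((hUdiff j) t).hasDerivAt
    rwa [h1 t j] at h
  have hV' : ∀ (t : ℝ) (j : ℤ × ℤ), HasDerivAt (fun s => V s j)
      (dxx h₁ (U t) j + dyy h₂ (U t) j - b (U t j) * R t j) t := by
    intro t j
    have h := ((hVdiff j) t).hasDerivAt
    rwa [h2 t j] at h
  have hR' : ∀ (t : ℝ) (j : ℤ × ℤ), HasDerivAt (fun s => R s j)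
      ((1/2) * b (U t j) * V t j) t := by
    intro t j
    have h := ((hRdiff j) t).hasDerivAt
    rwa [h3 t j] at h
  have hEfun : E = fun s => h₁ * h₂ *
      ∑ j₁ ∈ Finset.range N₁, ∑ j₂ ∈ Finset.range N₂,
        ((1/2) * (V s ((j₁ : ℤ), (j₂ : ℤ)))^2
          + (1/2) * (dx h₁ (U s) ((j₁ : ℤ), (j₂ : ℤ)))^2
          + (1/2) * (dy h₂ (U s) ((j₁ : ℤ), (j₂ : ℤ)))^2
          + (R s ((j₁ : ℤ), (j₂ : ℤ)))^2) := funext hE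
  have key : ∀ t : ℝ, HasDerivAt E 0 t := by
    intro t
    set D : ℕ → ℕ → ℝ := fun j₁ j₂ =>
      V t ((j₁ : ℤ), (j₂ : ℤ)) *
          (dxx h₁ (U t) ((j₁ : ℤ), (j₂ : ℤ)) + dyy h₂ (U t) ((j₁ : ℤ), (j₂ : ℤ))
            - b (U t ((j₁ : ℤ), (j₂ : ℤ))) * R t ((j₁ : ℤ), (j₂ : ℤ)))
        + ((U t ((j₁ : ℤ) + 1, (j₂ : ℤ)) - U t ((j₁ : ℤ), (j₂ : ℤ))) / h₁) *
            ((V t ((j₁ : ℤ) + 1, (j₂ : ℤ)) - V t ((j₁ : ℤ), (j₂ : ℤ))) / h₁)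
        + ((U t ((j₁ : ℤ), (j₂ : ℤ) + 1) - U t ((j₁ : ℤ), (j₂ : ℤ))) / h₂) *
            ((V t ((j₁ : ℤ), (j₂ : ℤ) + 1) - V t ((j₁ : ℤ), (j₂ : ℤ))) / h₂)
        + 2 * R t ((j₁ : ℤ), (j₂ : ℤ)) *
            ((1/2) * b (U t ((j₁ : ℤ), (j₂ : ℤ))) * V t ((j₁ : ℤ), (j₂ : ℤ))) with hD
    have hterm : ∀ j₁ j₂ : ℕ, HasDerivAt (fun s =>
        (1/2) * (V s ((j₁ : ℤ), (j₂ : ℤ)))^2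
          + (1/2) * (dx h₁ (U s) ((j₁ : ℤ), (j₂ : ℤ)))^2
          + (1/2) * (dy h₂ (U s) ((j₁ : ℤ), (j₂ : ℤ)))^2
          + (R s ((j₁ : ℤ), (j₂ : ℤ)))^2) (D j₁ j₂) t := by
      intro j₁ j₂
      have HV := ((hV' t ((j₁ : ℤ), (j₂ : ℤ))).fun_pow 2).const_mul ((1 : ℝ)/2)
      have HdxU : HasDerivAt (fun s => dx h₁ (U s) ((j₁ : ℤ), (j₂ : ℤ)))
          ((V t ((j₁ : ℤ) + 1, (j₂ : ℤ)) - V t ((j₁ : ℤ), (j₂ : ℤ))) / h₁) t := by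
        simp only [dx]
        exact ((hU' t _).sub (hU' t _)).div_const h₁
      have HdyU : HasDerivAt (fun s => dy h₂ (U s) ((j₁ : ℤ), (j₂ : ℤ)))
          ((V t ((j₁ : ℤ), (j₂ : ℤ) + 1) - V t ((j₁ : ℤ), (j₂ : ℤ))) / h₂) t := by
        simp only [dy]
        exact ((hU' t _).sub (hU' t _)).div_const h₂
      have H2 := (HdxU.fun_pow 2).const_mul ((1 : ℝ)/2)
      have H3 := (HdyU.fun_pow 2).const_mul ((1 : ℝ)/2)
      have H4 := (hR' t ((j₁ : ℤ), (j₂ : ℤ))).fun_pow 2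
      have Htot := ((HV.fun_add H2).fun_add H3).fun_add H4
      convert Htot using 1
      · rfl
      · rfl
      simp only [hD, dx, dy]
      norm_num
      ring
    have HsumE : HasDerivAt E
        (h₁ * h₂ * ∑ j₁ ∈ Finset.range N₁, ∑ j₂ ∈ Finset.range N₂, D j₁ j₂) t := by
      rw [hEfun]
      exact (HasDerivAt.fun_sum (fun j₁ _ =>
        HasDerivAt.fun_sum (fun j₂ _ => hterm j₁ j₂))).const_mul (h₁ * h₂)
    have hDzero : ∑ j₁ ∈ Finset.range N₁, ∑ j₂ ∈ Finset.range N₂, D j₁ j₂ = 0 := by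
      set X : ℤ → ℤ → ℝ := fun j₁ j₂ =>
        V t (j₁, j₂) * ((U t (j₁ + 1, j₂) - 2 * U t (j₁, j₂) + U t (j₁ - 1, j₂)) / h₁ ^ 2)
          + ((U t (j₁ + 1, j₂) - U t (j₁, j₂)) / h₁) * ((V t (j₁ + 1, j₂) - V t (j₁, j₂)) / h₁)
        with hX
      set Y : ℤ → ℤ → ℝ := fun j₁ j₂ =>
        V t (j₁, j₂) * ((U t (j₁, j₂ + 1) - 2 * U t (j₁, j₂) + U t (j₁, j₂ - 1)) / h₂ ^ 2)
          + ((U t (j₁, j₂ + 1) - U t (j₁, j₂)) / h₂) * ((V t (j₁, j₂ + 1) - V t (j₁, j₂)) / h₂)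
        with hY
      have hsplit : ∀ j₁ j₂ : ℕ, D j₁ j₂ = X (j₁ : ℤ) (j₂ : ℤ) + Y (j₁ : ℤ) (j₂ : ℤ) := by
        intro j₁ j₂
        simp only [hD, hX, hY, dxx, dyy]
        ring
      calc ∑ j₁ ∈ Finset.range N₁, ∑ j₂ ∈ Finset.range N₂, D j₁ j₂
          = ∑ j₁ ∈ Finset.range N₁, ∑ j₂ ∈ Finset.range N₂,
              (X (j₁ : ℤ) (j₂ : ℤ) + Y (j₁ : ℤ) (j₂ : ℤ)) := by
            exact Finset.sum_congr rfl fun j₁ _ =>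
              Finset.sum_congr rfl fun j₂ _ => hsplit j₁ j₂
        _ = (∑ j₁ ∈ Finset.range N₁, ∑ j₂ ∈ Finset.range N₂, X (j₁ : ℤ) (j₂ : ℤ))
            + ∑ j₁ ∈ Finset.range N₁, ∑ j₂ ∈ Finset.range N₂, Y (j₁ : ℤ) (j₂ : ℤ) := by
            simp [Finset.sum_add_distrib]
        _ = (∑ j₂ ∈ Finset.range N₂, ∑ j₁ ∈ Finset.range N₁, X (j₁ : ℤ) (j₂ : ℤ))
            + ∑ j₁ ∈ Finset.range N₁, ∑ j₂ ∈ Finset.range N₂, Y (j₁ : ℤ) (j₂ : ℤ) := by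
            rw [Finset.sum_comm]
        _ = 0 := by
            rw [Finset.sum_eq_zero, Finset.sum_eq_zero, add_zero]
            · intro j₁ _
              exact sbp N₂ hh₂.ne' (fun k => U t ((j₁ : ℤ), k)) (fun k => V t ((j₁ : ℤ), k))
                (fun k => (hUper t (j₁ : ℤ) k).2) (fun k => (hVper t (j₁ : ℤ) k).2)
            · intro j₂ _
              exact sbp N₁ hh₁.ne' (fun k => U t (k, (j₂ : ℤ))) (fun k => V t (k, (j₂ : ℤ)))
                (fun k => (hUper t k (j₂ : ℤ)).1) (fun k => (hVper t k (j₂ : ℤ)).1)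
    rw [hDzero, mul_zero] at HsumE
    exact HsumE
  intro t
  exact is_const_of_deriv_eq_zero (fun x => (key x).differentiableAt)
    (fun x => (key x).deriv) t 0
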